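/- Suppose a sequence of edge-disjoint directed paths P_0, P_1, ..., P_{T-1} decomposes a digraph G, and for each t the path P_t is given weight under the weighting w_t(v,u) = 1/d^+_{G_t}(v), where G_t = G minus the edges of P_0, ..., P_{t-1}. Then the total weight ∑_t w_t(P_t) equals ∑_{v ∈ V} ∑_{i=1}^{d^+_G(v)} 1/i. -/

import Mathlib

open Finset

variable {V : Type*} [Fintype V] [DecidableEq V]

/-- Out-degree of `v` in the digraph with edge set `E`. -/
def outDeg (E : Finset (V × V)) (v : V) : ℕ := (E.filter (fun e => e.1 = v)).card

/-- In-degree of `v` in the digraph with edge set `E`. -/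
def inDeg (E : Finset (V × V)) (v : V) : ℕ := (E.filter (fun e => e.2 = v)).card

/-- The list of edges traversed by a list of vertices. -/
def pathEdges (p : List V) : List (V × V) := p.zip p.tail

/-- `p` is a directed path in the digraph `E`: distinct vertices, consecutive edges. -/
def IsPath (E : Finset (V × V)) (p : List V) : Prop :=
  p.Nodup ∧ List.Chain' (fun a b => (a, b) ∈ E) p

/-- The digraph remaining after removing the edges of the first `t` paths. -/
def rem (E : Finset (V × V)) (P : ℕ → List V) (t : ℕ) : Finset (V × V) :=
  E \ (Finset.range t).biUnion (fun i => (pathEdges (P i)).toFinset)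


set_option linter.unusedSectionVars false

noncomputable def Harm (n : ℕ) : ℝ := ∑ i ∈ Finset.Icc 1 n, (1 : ℝ) / i

lemma Harm_succ (n : ℕ) : Harm (n + 1) = Harm n + 1 / (n + 1) := by
  rw [Harm, Harm, Finset.sum_Icc_succ_top (by omega : 1 ≤ n + 1)]
  push_cast
  ring

lemma pathEdges_map_fst : ∀ p : List V, (pathEdges p).map Prod.fst = p.dropLast
  | [] => rfl
  | [a] => rfl
  | a :: b :: l => by
      have := pathEdges_map_fst (b :: l)
      simp [pathEdges] at this ⊢
      exact this

lemma pathEdges_subset {E : Finset (V × V)} : ∀ {p : List V},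
    List.Chain' (fun a b => (a, b) ∈ E) p → ∀ e ∈ pathEdges p, e ∈ E
  | [], _, e, he => by simp [pathEdges] at he
  | [a], _, e, he => by simp [pathEdges] at he
  | a :: b :: l, h, e, he => by
      replace h := List.isChain_cons_cons.1 h
      simp only [pathEdges, List.zip_cons_cons] at he
      rcases List.mem_cons.1 he with rfl | he
      · exact h.1
      · exact pathEdges_subset h.2 e he

lemma step (A : Finset (V × V)) (p : List V) (hnd : p.Nodup)
    (hch : List.Chain' (fun a b => (a, b) ∈ A) p) :
    ((pathEdges p).map (fun e => 1 / (outDeg A e.1 : ℝ))).sum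
      = ∑ v : V, (Harm (outDeg A v) - Harm (outDeg (A \ (pathEdges p).toFinset) v)) := by
  have hfst := pathEdges_map_fst p
  have hndl : p.dropLast.Nodup := hnd.sublist (List.dropLast_sublist p)
  have hne : (pathEdges p).Nodup := by
    have h2 := hndl; rw [← hfst] at h2; exact h2.of_map
  have hsub : (pathEdges p).toFinset ⊆ A := fun e he =>
    pathEdges_subset hch e (List.mem_toFinset.1 he)
  have hcardS : ∀ v : V, (((pathEdges p).toFinset).filter (fun e => e.1 = v)).card
      = if v ∈ p.dropLast then 1 else 0 := by
    intro v
    have hfin : (pathEdges p).toFinset.filter (fun e => e.1 = v)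
        = ((pathEdges p).filter (fun e => e.1 = v)).toFinset := by
      ext e; simp
    rw [hfin, List.card_toFinset, (hne.filter _).dedup]
    have h1 : ((pathEdges p).filter (fun e => decide (e.1 = v))).length
        = (pathEdges p).countP (fun e => decide (e.1 = v)) :=
      List.countP_eq_length_filter.symm
    rw [h1]
    have h2 : (pathEdges p).countP (fun e => decide (e.1 = v))
        = ((pathEdges p).map Prod.fst).countP (fun a => decide (a = v)) := by
      rw [List.countP_map]; rfl
    rw [h2, hfst]
    have h3 : p.dropLast.countP (fun a => decide (a = v)) = p.dropLast.count v := by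
      rw [List.count]; congr 1
    rw [h3]
    by_cases hv : v ∈ p.dropLast
    · simp [hv, List.count_eq_one_of_mem hndl hv]
    · simp [hv, List.count_eq_zero_of_not_mem hv]
  have hdeg : ∀ v : V, outDeg (A \ (pathEdges p).toFinset) v
      = outDeg A v - (if v ∈ p.dropLast then 1 else 0) := by
    intro v
    have hsd : (A \ (pathEdges p).toFinset).filter (fun e => e.1 = v)
        = A.filter (fun e => e.1 = v) \ ((pathEdges p).toFinset).filter (fun e => e.1 = v) := by
      ext e; simp only [Finset.mem_filter, Finset.mem_sdiff]; tauto
    rw [outDeg, hsd, Finset.card_sdiff_of_subset (Finset.filter_subset_filter _ hsub), hcardS v]; rfl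
  have hpos : ∀ v ∈ p.dropLast, 1 ≤ outDeg A v := by
    intro v hv
    rw [← hfst] at hv
    obtain ⟨e, he, hev⟩ := List.mem_map.1 hv
    have : e ∈ A.filter (fun e => e.1 = v) :=
      Finset.mem_filter.2 ⟨hsub (List.mem_toFinset.2 he), hev⟩
    exact Finset.card_pos.2 ⟨e, this⟩
  -- rewrite LHS as a sum over dropLast
  have hmap : (pathEdges p).map (fun e => 1 / (outDeg A e.1 : ℝ))
      = p.dropLast.map (fun v => 1 / (outDeg A v : ℝ)) := by
    rw [← hfst, List.map_map]; rfl
  rw [hmap]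
  have hlist : (p.dropLast.map (fun v => 1 / (outDeg A v : ℝ))).sum
      = ∑ v ∈ p.dropLast.toFinset, 1 / (outDeg A v : ℝ) := by
    rw [List.sum_toFinset _ hndl]
  rw [hlist]
  have hcong : ∑ v ∈ p.dropLast.toFinset, 1 / (outDeg A v : ℝ)
      = ∑ v ∈ p.dropLast.toFinset,
          (Harm (outDeg A v) - Harm (outDeg (A \ (pathEdges p).toFinset) v)) := by
    apply Finset.sum_congr rfl
    intro v hv
    have hv' : v ∈ p.dropLast := List.mem_toFinset.1 hv
    rw [hdeg v, if_pos hv']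
    have h1 := hpos v hv'
    have heq : outDeg A v - 1 + 1 = outDeg A v := by omega
    calc 1 / (outDeg A v : ℝ)
        = Harm (outDeg A v - 1 + 1) - Harm (outDeg A v - 1) := by
          rw [Harm_succ]
          have hc : ((outDeg A v - 1 : ℕ) : ℝ) + 1 = (outDeg A v : ℝ) := by
            rw [Nat.cast_sub h1]; ring
          rw [hc]; ring
      _ = Harm (outDeg A v) - Harm (outDeg A v - 1) := by rw [heq]
  rw [hcong]
  apply Finset.sum_subset (Finset.subset_univ _)
  intro v _ hv
  rw [hdeg v, if_neg (fun h => hv (List.mem_toFinset.2 h)), Nat.sub_zero, sub_self]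

/-- If the paths `P 0, …, P (T-1)` decompose `E` (each `P t` being a
path in the remaining graph `rem E P t`, with nothing left at time `T`), and each
edge of `P t` gets weight `1 / d⁺(v)` in the remaining graph, then the total weight
of all paths equals `∑_v ∑_{i=1}^{d⁺_E(v)} 1/i`. -/

theorem stmt_14 (E : Finset (V × V)) (T : ℕ) (P : ℕ → List V)
    (hpath : ∀ t < T, IsPath (rem E P t) (P t))
    (hempty : rem E P T = ∅) :
    ∑ t ∈ Finset.range T,
        ((pathEdges (P t)).map (fun e => 1 / (outDeg (rem E P t) e.1 : ℝ))).sum =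
      ∑ v : V, ∑ i ∈ Finset.Icc 1 (outDeg E v), (1 : ℝ) / i := by
  have hsucc : ∀ t, rem E P (t + 1) = rem E P t \ (pathEdges (P t)).toFinset := by
    intro t
    simp only [rem, Finset.range_add_one, Finset.biUnion_insert]
    ext e; simp only [Finset.mem_sdiff, Finset.mem_union]; tauto
  have key : ∀ t ∈ Finset.range T,
      ((pathEdges (P t)).map (fun e => 1 / (outDeg (rem E P t) e.1 : ℝ))).sum
        = ∑ v : V, (Harm (outDeg (rem E P t) v) - Harm (outDeg (rem E P (t + 1)) v)) := by
    intro t ht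
    obtain ⟨h1, h2⟩ := hpath t (Finset.mem_range.1 ht)
    rw [hsucc t]
    exact step _ _ h1 h2
  rw [Finset.sum_congr rfl key, Finset.sum_comm]
  have h0 : rem E P 0 = E := by simp [rem]
  have hT : ∀ v : V, outDeg (rem E P T) v = 0 := by intro v; simp [hempty, outDeg]
  apply Finset.sum_congr rfl
  intro v _
  rw [Finset.sum_range_sub' (fun t => Harm (outDeg (rem E P t) v))]
  rw [h0, hT v]
  simp [Harm]
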